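/- Let ψ ∈ ℂ^8 be a unit vector all of whose coordinates are real numbers. Then there exist 2×2 real orthogonal matrices W₀, W₂, W₃, W₄, W₅, W₆, W₇, W₈ such that (W₆ ⊗ W₇ ⊗ W₈)·cz₁₂·cz₀₂·(I ⊗ W₄ ⊗ W₅)·cz₀₁·(I ⊗ W₂ ⊗ W₃)·cz₀₁·(I ⊗ I ⊗ W₀)·ψ = |000⟩, where I is the 2×2 identity matrix. In other words, every real 3-qubit state can be prepared using real local gates and at most four controlled-Z gates. -/

import Mathlib

open Matrix Complex
open scoped ComplexConjugate

noncomputable section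

/-- The matrix `T₀` of a 3-qubit state vector `ψ = |0⟩T₀ + |1⟩T₁`. -/
def q3T0 (ψ : Fin 8 → ℂ) : Matrix (Fin 2) (Fin 2) ℂ := !![ψ 0, ψ 1; ψ 2, ψ 3]

/-- The matrix `T₁` of a 3-qubit state vector `ψ = |0⟩T₀ + |1⟩T₁`. -/
def q3T1 (ψ : Fin 8 → ℂ) : Matrix (Fin 2) (Fin 2) ℂ := !![ψ 4, ψ 5; ψ 6, ψ 7]

/-- bit of qubit 2 (leftmost) in the index `4a+2b+c`. -/
def bit2 (i : Fin 8) : Fin 2 := ⟨i.val / 4, by have := i.isLt; omega⟩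
/-- bit of qubit 1 (middle). -/
def bit1 (i : Fin 8) : Fin 2 := ⟨i.val / 2 % 2, by omega⟩
/-- bit of qubit 0 (rightmost). -/
def bit0 (i : Fin 8) : Fin 2 := ⟨i.val % 2, by omega⟩

/-- Kronecker product `U ⊗ V ⊗ W` acting on `ℂ^8`, with `|abc⟩` at index `4a+2b+c`. -/
def kron3 (U V W : Matrix (Fin 2) (Fin 2) ℂ) : Matrix (Fin 8) (Fin 8) ℂ :=
  fun i j => U (bit2 i) (bit2 j) * V (bit1 i) (bit1 j) * W (bit0 i) (bit0 j)

def cz01 : Matrix (Fin 8) (Fin 8) ℂ := diagonal ![1, 1, 1, -1, 1, 1, 1, -1]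
def cz02 : Matrix (Fin 8) (Fin 8) ℂ := diagonal ![1, 1, 1, 1, 1, -1, 1, -1]
def cz12 : Matrix (Fin 8) (Fin 8) ℂ := diagonal ![1, 1, 1, 1, 1, 1, -1, -1]

/-- The basis state `|000⟩` in `ℂ^8`. -/
def e000 : Fin 8 → ℂ := ![1, 0, 0, 0, 0, 0, 0, 0]

/-- Inclusion of a real 2×2 matrix into the complex 2×2 matrices. -/
def mc (W : Matrix (Fin 2) (Fin 2) ℝ) : Matrix (Fin 2) (Fin 2) ℂ :=
  W.map (fun r => (r : ℂ))

def Complex.abs : AbsoluteValue ℂ ℝ where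
  toFun z := ‖z‖
  map_mul' := norm_mul
  nonneg' := norm_nonneg
  eq_zero' _ := norm_eq_zero
  add_le' := norm_add_le

lemma Complex.abs_apply (z : ℂ) : Complex.abs z = Real.sqrt (Complex.normSq z) := by
  show ‖z‖ = _
  rw [Complex.normSq_eq_norm_sq, Real.sqrt_sq (norm_nonneg _)]

@[simp] lemma Complex.abs_conj (z : ℂ) : Complex.abs ((starRingEnd ℂ) z) = Complex.abs z :=
  Complex.norm_conj z

lemma Complex.sq_abs (z : ℂ) : Complex.abs z ^ 2 = Complex.normSq z := Complex.sq_norm z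

@[simp] lemma Complex.abs_ofReal (r : ℝ) : Complex.abs (r : ℂ) = |r| := Complex.norm_real r

@[simp] lemma Complex.abs_abs (z : ℂ) : |Complex.abs z| = Complex.abs z :=
  abs_of_nonneg (norm_nonneg z)

@[simp] lemma Complex.abs_I : Complex.abs Complex.I = 1 := Complex.norm_I

-- ===== scalar helper lemmas =====
lemma csqrt (z : ℂ) : ∃ w : ℂ, w * w = z := by
  obtain ⟨w, hw⟩ := IsAlgClosed.exists_pow_nat_eq z (n := 2) (by norm_num)
  exact ⟨w, by rw [← hw]; ring⟩

lemma half_angle (C S : ℝ) (h : C^2 + S^2 = 1) :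
    ∃ x y : ℝ, x^2 + y^2 = 1 ∧ x^2 - y^2 = C ∧ 2*x*y = S := by
  obtain ⟨w, hw⟩ := csqrt (⟨C, S⟩ : ℂ)
  have hre : w.re*w.re - w.im*w.im = C := by
    have := congrArg Complex.re hw; simpa [Complex.mul_re] using this
  have him : w.re*w.im + w.im*w.re = S := by
    have := congrArg Complex.im hw; simpa [Complex.mul_im] using this
  refine ⟨w.re, w.im, ?_, by linarith [hre], by linarith [him]⟩
  have h1 : (w.re*w.re - w.im*w.im)^2 + (w.re*w.im + w.im*w.re)^2 = 1 := by
    rw [hre, him]; exact h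
  have h2 : (w.re^2 + w.im^2 - 1) * (w.re^2 + w.im^2 + 1) = 0 := by linear_combination h1
  rcases mul_eq_zero.mp h2 with h3 | h3
  · linarith
  · nlinarith [sq_nonneg w.re, sq_nonneg w.im]

lemma choose_unit_perp (c : ℂ) : ∃ α : ℂ, Complex.abs α = 1 ∧ (α * c).re = 0 := by
  by_cases hc : c = 0
  · exact ⟨1, by simp, by simp [hc]⟩
  · refine ⟨Complex.I * (starRingEnd ℂ) c / Complex.abs c, ?_, ?_⟩
    · rw [map_div₀, _root_.map_mul]
      simp [Complex.abs_conj, div_self (Complex.abs.ne_zero hc)]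
    · have : Complex.I * (starRingEnd ℂ) c / (Complex.abs c : ℂ) * c
          = Complex.I * ((Complex.normSq c : ℝ) : ℂ) / (Complex.abs c : ℂ) := by
        rw [div_mul_eq_mul_div, mul_assoc, mul_comm ((starRingEnd ℂ) c) c, Complex.mul_conj]
      rw [this, Complex.div_ofReal_re]
      simp [Complex.mul_re]

lemma choose_alpha_beta (a b c d : ℂ) (hab : Complex.abs a = Complex.abs b) :
    ∃ α β : ℂ, Complex.abs α = 1 ∧ Complex.abs β = 1 ∧
      (α*a + β*b).re = 0 ∧ (α*c + β*d).re = 0 := by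
  by_cases h0 : Complex.abs a = 0
  · have ha : a = 0 := Complex.abs.eq_zero.mp h0
    have hb : b = 0 := Complex.abs.eq_zero.mp (by rw [← hab]; exact h0)
    obtain ⟨α, hα1, hα2⟩ := choose_unit_perp c
    obtain ⟨β, hβ1, hβ2⟩ := choose_unit_perp d
    exact ⟨α, β, hα1, hβ1, by simp [ha, hb], by simp [Complex.add_re, hα2, hβ2]⟩
  · have hρpos : 0 < Complex.abs a := lt_of_le_of_ne (Complex.abs.nonneg a) (Ne.symm h0)
    have hρne : ((Complex.abs a : ℝ):ℂ) ≠ 0 := by exact_mod_cast ne_of_gt hρpos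
    obtain ⟨ε, hε1, hε2⟩ := choose_unit_perp ((starRingEnd ℂ) a * c - b * (starRingEnd ℂ) d)
    refine ⟨ε * (starRingEnd ℂ) a / Complex.abs a,
      -((starRingEnd ℂ) ε * (starRingEnd ℂ) b / Complex.abs a), ?_, ?_, ?_, ?_⟩
    · rw [map_div₀, _root_.map_mul]
      simp [Complex.abs_conj, hε1, abs_of_pos hρpos, div_self (ne_of_gt hρpos)]
    · rw [map_neg_eq_map, map_div₀, _root_.map_mul]
      simp [Complex.abs_conj, hε1, abs_of_pos hρpos]
      rw [hab]
      exact div_self (by rw [← hab]; exact ne_of_gt hρpos)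
    · have h1 : ε * (starRingEnd ℂ) a / Complex.abs a * a
          = ((Complex.normSq a :ℝ):ℂ) * ε / Complex.abs a := by
        rw [div_mul_eq_mul_div, mul_assoc, mul_comm ((starRingEnd ℂ) a) a, Complex.mul_conj]
        ring
      have h2 : -((starRingEnd ℂ) ε * (starRingEnd ℂ) b / Complex.abs a) * b
          = -(((Complex.normSq b :ℝ):ℂ) * (starRingEnd ℂ) ε / Complex.abs a) := by
        rw [neg_mul, div_mul_eq_mul_div, mul_assoc, mul_comm ((starRingEnd ℂ) b) b,
          Complex.mul_conj]
        ring
      have hnsb : Complex.normSq b = Complex.normSq a := by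
        rw [← Complex.sq_abs, ← Complex.sq_abs, hab]
      rw [h1, h2, hnsb, Complex.add_re, Complex.neg_re, Complex.div_ofReal_re,
        Complex.div_ofReal_re]
      have e1 : (((Complex.normSq a :ℝ):ℂ) * ε).re = Complex.normSq a * ε.re := by
        simp [Complex.mul_re]
      have e2 : (((Complex.normSq a :ℝ):ℂ) * (starRingEnd ℂ) ε).re
          = Complex.normSq a * ε.re := by
        simp [Complex.mul_re]
      rw [e1, e2]; ring
    · have h1 : ε * (starRingEnd ℂ) a / Complex.abs a * c
          = ε * ((starRingEnd ℂ) a * c) / Complex.abs a := by ring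
      have h2 : -((starRingEnd ℂ) ε * (starRingEnd ℂ) b / Complex.abs a) * d
          = -((starRingEnd ℂ) (ε * (b * (starRingEnd ℂ) d)) / Complex.abs a) := by
        simp only [_root_.map_mul, Complex.conj_conj]; ring
      rw [h1, h2, Complex.add_re, Complex.neg_re, Complex.div_ofReal_re, Complex.div_ofReal_re,
        Complex.conj_re]
      have h3 : (ε * ((starRingEnd ℂ) a * c)).re = (ε * (b * (starRingEnd ℂ) d)).re := by
        have h4 := hε2
        rw [mul_sub, Complex.sub_re] at h4
        linarith
      rw [h3]; ring

lemma choose_g (z w : ℂ) : ∃ g0 g1 : ℝ, g0^2 + g1^2 = 1 ∧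
    Complex.normSq ((g0:ℂ) * z - (g1:ℂ) * (starRingEnd ℂ) w)
      = Complex.normSq ((g0:ℂ) * w + (g1:ℂ) * (starRingEnd ℂ) z) := by
  set P : ℝ := Complex.normSq z - Complex.normSq w with hP
  set Q : ℝ := 2 * (z * w).re with hQ
  have key : ∀ g0 g1 : ℝ,
      Complex.normSq ((g0:ℂ) * z - (g1:ℂ) * (starRingEnd ℂ) w)
        - Complex.normSq ((g0:ℂ) * w + (g1:ℂ) * (starRingEnd ℂ) z)
      = (g0^2 - g1^2) * P - (2*g0*g1) * Q := by
    intro g0 g1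
    simp only [hP, hQ, Complex.normSq_apply, Complex.sub_re, Complex.sub_im, Complex.add_re,
      Complex.add_im, Complex.mul_re, Complex.mul_im, Complex.conj_re, Complex.conj_im,
      Complex.ofReal_re, Complex.ofReal_im]
    ring
  by_cases hN : P^2 + Q^2 = 0
  · have hP0 : P = 0 := by nlinarith [sq_nonneg P, sq_nonneg Q]
    refine ⟨1, 0, by norm_num, ?_⟩
    have h := key 1 0
    rw [hP0] at h
    norm_num at h
    simp only [Complex.ofReal_one, Complex.ofReal_zero, one_mul, zero_mul, sub_zero, add_zero]
    linarith
  · set N : ℝ := Real.sqrt (P^2 + Q^2) with hNdef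
    have hNpos : 0 < N := Real.sqrt_pos.mpr (lt_of_le_of_ne (by positivity) (Ne.symm hN))
    have hN2 : N^2 = P^2 + Q^2 := Real.sq_sqrt (by positivity)
    obtain ⟨g0, g1, hg, hC, hS⟩ := half_angle (Q/N) (P/N) (by
      field_simp
      linarith [hN2])
    refine ⟨g0, g1, hg, ?_⟩
    have h := key g0 g1
    rw [hC, hS] at h
    have h2 : (Q/N) * P - (P/N) * Q = 0 := by field_simp; ring
    linarith
lemma rank1 (m00 m01 m10 m11 : ℝ) (h : m00*m11 - m01*m10 = 0) :
    ∃ s p0 p1 q0 q1 : ℝ, p0^2+p1^2 = 1 ∧ q0^2+q1^2 = 1 ∧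
      s^2 = m00^2+m01^2+m10^2+m11^2 ∧
      m00 = s*(p0*q0) ∧ m01 = s*(p0*q1) ∧ m10 = s*(p1*q0) ∧ m11 = s*(p1*q1) := by
  by_cases h0 : m00^2 + m01^2 = 0
  · have e00 : m00 = 0 := by nlinarith [sq_nonneg m00, sq_nonneg m01]
    have e01 : m01 = 0 := by nlinarith [sq_nonneg m00, sq_nonneg m01]
    by_cases h1 : m10^2 + m11^2 = 0
    · have e10 : m10 = 0 := by nlinarith [sq_nonneg m10, sq_nonneg m11]
      have e11 : m11 = 0 := by nlinarith [sq_nonneg m10, sq_nonneg m11]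
      exact ⟨0, 1, 0, 1, 0, by norm_num, by norm_num, by
        rw [e00, e01, e10, e11]; norm_num, by rw [e00]; norm_num, by rw [e01]; norm_num,
        by rw [e10]; norm_num, by rw [e11]; norm_num⟩
    · set n1 : ℝ := Real.sqrt (m10^2 + m11^2) with hn1
      have hn1pos : 0 < n1 := Real.sqrt_pos.mpr (lt_of_le_of_ne (by positivity) (Ne.symm h1))
      have hn1sq : n1^2 = m10^2 + m11^2 := Real.sq_sqrt (by positivity)
      refine ⟨n1, 0, 1, m10/n1, m11/n1, by norm_num, ?_, ?_, ?_, ?_, ?_, ?_⟩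
      · field_simp; linarith [hn1sq]
      · rw [hn1sq, e00, e01]; ring
      · rw [e00]; ring
      · rw [e01]; ring
      · field_simp
      · field_simp
  · set n0 : ℝ := Real.sqrt (m00^2 + m01^2) with hn0
    have hn0pos : 0 < n0 := Real.sqrt_pos.mpr (lt_of_le_of_ne (by positivity) (Ne.symm h0))
    have hn0sq : n0^2 = m00^2 + m01^2 := Real.sq_sqrt (by positivity)
    set c : ℝ := (m10*m00 + m11*m01)/n0 with hc
    set s : ℝ := Real.sqrt (n0^2 + c^2) with hs
    have hspos : 0 < s := Real.sqrt_pos.mpr (by positivity)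
    have hssq : s^2 = n0^2 + c^2 := Real.sq_sqrt (by positivity)
    have hcn : c * n0 = m10*m00 + m11*m01 := by rw [hc]; field_simp
    -- row1 is c/n0 times row0
    have hr10 : m10 * n0^2 = (m10*m00 + m11*m01) * m00 := by
      rw [hn0sq]; linear_combination (-m01) * h
    have hr11 : m11 * n0^2 = (m10*m00 + m11*m01) * m01 := by
      rw [hn0sq]; linear_combination m00 * h
    have hc2 : c^2 = m10^2 + m11^2 := by
      have expand : (m10*m00 + m11*m01)^2 = (m10^2+m11^2)*(m00^2+m01^2) - (m10*m01 - m11*m00)^2 := by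
        ring
      have hdet : m10*m01 - m11*m00 = 0 := by linarith [h]
      rw [hc, div_pow, expand, hdet, hn0sq]
      field_simp
      ring
    refine ⟨s, n0/s, c/s, m00/n0, m01/n0, ?_, ?_, ?_, ?_, ?_, ?_, ?_⟩
    · field_simp; linarith [hssq]
    · field_simp; linarith [hn0sq]
    · rw [hssq, hc2, hn0sq]; ring
    · field_simp
    · field_simp
    · rw [hc]; field_simp; linear_combination hr10
    · rw [hc]; field_simp; linear_combination hr11

def rotR (x y : ℝ) : Matrix (Fin 2) (Fin 2) ℝ := !![x, -y; y, x]

lemma rotR_mem {x y : ℝ} (h : x^2 + y^2 = 1) :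
    rotR x y ∈ Matrix.orthogonalGroup (Fin 2) ℝ := by
  rw [Matrix.mem_orthogonalGroup_iff]
  ext i j
  simp only [rotR, Matrix.star_eq_conjTranspose, Matrix.mul_apply, Fin.sum_univ_two,
    Matrix.conjTranspose_apply, star_trivial]
  fin_cases i <;> fin_cases j <;>
    simp [Matrix.one_apply] <;> nlinarith [h]

lemma unit_abs_sqrt {w z : ℂ} (h : w * w = z) (hz : Complex.abs z = 1) :
    Complex.abs w = 1 := by
  have h1 : Complex.abs w * Complex.abs w = 1 := by
    rw [← _root_.map_mul, h, hz]
  rcases mul_self_eq_one_iff.mp h1 with h2 | h2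
  · exact h2
  · have := Complex.abs.nonneg w; linarith

lemma unit_re_im {z : ℂ} (h : Complex.abs z = 1) : z.re^2 + z.im^2 = 1 := by
  have h1 := Complex.sq_abs z
  rw [h] at h1
  rw [Complex.normSq_apply] at h1
  nlinarith [h1]

lemma mul_conj_one {z : ℂ} (h : Complex.abs z = 1) : z * (starRingEnd ℂ) z = 1 := by
  rw [Complex.mul_conj]
  have h1 := Complex.sq_abs z
  rw [h] at h1
  norm_num at h1
  rw [← h1]
  norm_num

-- ===== index computation lemmas =====
@[simp] lemma b2_0 : bit2 0 = 0 := rfl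
@[simp] lemma b2_1 : bit2 1 = 0 := rfl
@[simp] lemma b2_2 : bit2 2 = 0 := rfl
@[simp] lemma b2_3 : bit2 3 = 0 := rfl
@[simp] lemma b2_4 : bit2 4 = 1 := rfl
@[simp] lemma b2_5 : bit2 5 = 1 := rfl
@[simp] lemma b2_6 : bit2 6 = 1 := rfl
@[simp] lemma b2_7 : bit2 7 = 1 := rfl
@[simp] lemma b1_0 : bit1 0 = 0 := rfl
@[simp] lemma b1_1 : bit1 1 = 0 := rfl
@[simp] lemma b1_2 : bit1 2 = 1 := rfl
@[simp] lemma b1_3 : bit1 3 = 1 := rfl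
@[simp] lemma b1_4 : bit1 4 = 0 := rfl
@[simp] lemma b1_5 : bit1 5 = 0 := rfl
@[simp] lemma b1_6 : bit1 6 = 1 := rfl
@[simp] lemma b1_7 : bit1 7 = 1 := rfl
@[simp] lemma b0_0 : bit0 0 = 0 := rfl
@[simp] lemma b0_1 : bit0 1 = 1 := rfl
@[simp] lemma b0_2 : bit0 2 = 0 := rfl
@[simp] lemma b0_3 : bit0 3 = 1 := rfl
@[simp] lemma b0_4 : bit0 4 = 0 := rfl
@[simp] lemma b0_5 : bit0 5 = 1 := rfl
@[simp] lemma b0_6 : bit0 6 = 0 := rfl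
@[simp] lemma b0_7 : bit0 7 = 1 := rfl

section Vec8
variable {α : Type*}
@[simp] lemma v8_0 (x0 x1 x2 x3 x4 x5 x6 x7 : α) : ![x0,x1,x2,x3,x4,x5,x6,x7] (0:Fin 8) = x0 := rfl
@[simp] lemma v8_1 (x0 x1 x2 x3 x4 x5 x6 x7 : α) : ![x0,x1,x2,x3,x4,x5,x6,x7] (1:Fin 8) = x1 := rfl
@[simp] lemma v8_2 (x0 x1 x2 x3 x4 x5 x6 x7 : α) : ![x0,x1,x2,x3,x4,x5,x6,x7] (2:Fin 8) = x2 := rfl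
@[simp] lemma v8_3 (x0 x1 x2 x3 x4 x5 x6 x7 : α) : ![x0,x1,x2,x3,x4,x5,x6,x7] (3:Fin 8) = x3 := rfl
@[simp] lemma v8_4 (x0 x1 x2 x3 x4 x5 x6 x7 : α) : ![x0,x1,x2,x3,x4,x5,x6,x7] (4:Fin 8) = x4 := rfl
@[simp] lemma v8_5 (x0 x1 x2 x3 x4 x5 x6 x7 : α) : ![x0,x1,x2,x3,x4,x5,x6,x7] (5:Fin 8) = x5 := rfl
@[simp] lemma v8_6 (x0 x1 x2 x3 x4 x5 x6 x7 : α) : ![x0,x1,x2,x3,x4,x5,x6,x7] (6:Fin 8) = x6 := rfl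
@[simp] lemma v8_7 (x0 x1 x2 x3 x4 x5 x6 x7 : α) : ![x0,x1,x2,x3,x4,x5,x6,x7] (7:Fin 8) = x7 := rfl
end Vec8

-- ===== circuit stage lemmas =====
lemma stW0 (g0 g1 : ℝ) (x0 x1 x2 x3 x4 x5 x6 x7 : ℂ) :
    (kron3 1 1 (mc (rotR g0 g1))).mulVec ![x0,x1,x2,x3,x4,x5,x6,x7] =
    ![↑g0 * x0 - ↑g1 * x1, ↑g1 * x0 + ↑g0 * x1, ↑g0 * x2 - ↑g1 * x3, ↑g1 * x2 + ↑g0 * x3, ↑g0 * x4 - ↑g1 * x5, ↑g1 * x4 + ↑g0 * x5, ↑g0 * x6 - ↑g1 * x7, ↑g1 * x6 + ↑g0 * x7] := by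
  funext i
  fin_cases i <;> simp [kron3, mc, rotR, cz01, cz02, cz12, Matrix.mulVec, dotProduct, Fin.sum_univ_eight, Matrix.one_apply, Matrix.mulVec_diagonal] <;> ring

lemma st23 (a0 a1 b0 b1 : ℝ) (x0 x1 x2 x3 x4 x5 x6 x7 : ℂ) :
    (kron3 1 (mc (rotR a0 a1)) (mc (rotR b0 b1))).mulVec ![x0,x1,x2,x3,x4,x5,x6,x7] =
    ![↑b0 * (↑a0 * (x0) - ↑a1 * (x2)) - ↑b1 * (↑a0 * (x1) - ↑a1 * (x3)), ↑b1 * (↑a0 * (x0) - ↑a1 * (x2)) + ↑b0 * (↑a0 * (x1) - ↑a1 * (x3)), ↑b0 * (↑a1 * (x0) + ↑a0 * (x2)) - ↑b1 * (↑a1 * (x1) + ↑a0 * (x3)), ↑b1 * (↑a1 * (x0) + ↑a0 * (x2)) + ↑b0 * (↑a1 * (x1) + ↑a0 * (x3)), ↑b0 * (↑a0 * (x4) - ↑a1 * (x6)) - ↑b1 * (↑a0 * (x5) - ↑a1 * (x7)), ↑b1 * (↑a0 * (x4) - ↑a1 * (x6)) + ↑b0 * (↑a0 * (x5) - ↑a1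 * (x7)), ↑b0 * (↑a1 * (x4) + ↑a0 * (x6)) - ↑b1 * (↑a1 * (x5) + ↑a0 * (x7)), ↑b1 * (↑a1 * (x4) + ↑a0 * (x6)) + ↑b0 * (↑a1 * (x5) + ↑a0 * (x7))] := by
  funext i
  fin_cases i <;> simp [kron3, mc, rotR, cz01, cz02, cz12, Matrix.mulVec, dotProduct, Fin.sum_univ_eight, Matrix.one_apply, Matrix.mulVec_diagonal] <;> ring

lemma czA (x0 x1 x2 x3 x4 x5 x6 x7 : ℂ) :
    cz01.mulVec ![x0,x1,x2,x3,x4,x5,x6,x7] = ![x0, x1, x2, -x3, x4, x5, x6, -x7] := by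
  funext i
  fin_cases i <;> simp [kron3, mc, rotR, cz01, cz02, cz12, Matrix.mulVec, dotProduct, Fin.sum_univ_eight, Matrix.one_apply, Matrix.mulVec_diagonal] <;> ring

lemma czB (x0 x1 x2 x3 x4 x5 x6 x7 : ℂ) :
    cz02.mulVec ![x0,x1,x2,x3,x4,x5,x6,x7] = ![x0, x1, x2, x3, x4, -x5, x6, -x7] := by
  funext i
  fin_cases i <;> simp [kron3, mc, rotR, cz01, cz02, cz12, Matrix.mulVec, dotProduct, Fin.sum_univ_eight, Matrix.one_apply, Matrix.mulVec_diagonal] <;> ring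

lemma czC (x0 x1 x2 x3 x4 x5 x6 x7 : ℂ) :
    cz12.mulVec ![x0,x1,x2,x3,x4,x5,x6,x7] = ![x0, x1, x2, x3, x4, x5, -x6, -x7] := by
  funext i
  fin_cases i <;> simp [kron3, mc, rotR, cz01, cz02, cz12, Matrix.mulVec, dotProduct, Fin.sum_univ_eight, Matrix.one_apply, Matrix.mulVec_diagonal] <;> ring

lemma st45 (c0 c1 d0 d1 s t p0 p1 q0 q1 e0 e1 f0 f1 v0 v1 w0 w1 : ℝ)
    (hA0 : c0*p0 - c1*p1 = v0) (hA1 : c1*p0 + c0*p1 = v1)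
    (hA0' : c0*e0 - c1*e1 = v0) (hA1' : c1*e0 + c0*e1 = -v1)
    (hB0 : d0*q0 - d1*q1 = w0) (hB1 : d1*q0 + d0*q1 = w1)
    (hB0' : d0*f0 - d1*f1 = w0) (hB1' : d1*f0 + d0*f1 = -w1) :
    (kron3 1 (mc (rotR c0 c1)) (mc (rotR d0 d1))).mulVec
      ![↑(s * (p0 * q0)), ↑(s * (p0 * q1)), ↑(s * (p1 * q0)), ↑(s * (p1 * q1)), ↑(t * (e0 * f0)), ↑(t * (e0 * f1)), ↑(t * (e1 * f0)), ↑(t * (e1 * f1))] =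
    ![↑(s * (v0 * w0)), ↑(s * (v0 * w1)), ↑(s * (v1 * w0)), ↑(s * (v1 * w1)), ↑(t * (v0 * w0)), -↑(t * (v0 * w1)), -↑(t * (v1 * w0)), ↑(t * (v1 * w1))] := by
  have hA0c : (c0:ℂ)*p0 - c1*p1 = v0 := by exact_mod_cast hA0
  have hA1c : (c1:ℂ)*p0 + c0*p1 = v1 := by exact_mod_cast hA1
  have hA0c' : (c0:ℂ)*e0 - c1*e1 = v0 := by exact_mod_cast hA0'
  have hA1c' : (c1:ℂ)*e0 + c0*e1 = -v1 := by exact_mod_cast hA1'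
  have hB0c : (d0:ℂ)*q0 - d1*q1 = w0 := by exact_mod_cast hB0
  have hB1c : (d1:ℂ)*q0 + d0*q1 = w1 := by exact_mod_cast hB1
  have hB0c' : (d0:ℂ)*f0 - d1*f1 = w0 := by exact_mod_cast hB0'
  have hB1c' : (d1:ℂ)*f0 + d0*f1 = -w1 := by exact_mod_cast hB1'
  funext i
  fin_cases i
  · simp [kron3, mc, rotR, cz01, cz02, cz12, Matrix.mulVec, dotProduct, Fin.sum_univ_eight, Matrix.one_apply, Matrix.mulVec_diagonal]; push_cast
    linear_combination (s:ℂ)*((c0:ℂ)*p0 - c1*p1)*hB0c + (s:ℂ)*(w0:ℂ)*hA0c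
  · simp [kron3, mc, rotR, cz01, cz02, cz12, Matrix.mulVec, dotProduct, Fin.sum_univ_eight, Matrix.one_apply, Matrix.mulVec_diagonal]; push_cast
    linear_combination (s:ℂ)*((c0:ℂ)*p0 - c1*p1)*hB1c + (s:ℂ)*(w1:ℂ)*hA0c
  · simp [kron3, mc, rotR, cz01, cz02, cz12, Matrix.mulVec, dotProduct, Fin.sum_univ_eight, Matrix.one_apply, Matrix.mulVec_diagonal]; push_cast
    linear_combination (s:ℂ)*((c1:ℂ)*p0 + c0*p1)*hB0c + (s:ℂ)*(w0:ℂ)*hA1c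
  · simp [kron3, mc, rotR, cz01, cz02, cz12, Matrix.mulVec, dotProduct, Fin.sum_univ_eight, Matrix.one_apply, Matrix.mulVec_diagonal]; push_cast
    linear_combination (s:ℂ)*((c1:ℂ)*p0 + c0*p1)*hB1c + (s:ℂ)*(w1:ℂ)*hA1c
  · simp [kron3, mc, rotR, cz01, cz02, cz12, Matrix.mulVec, dotProduct, Fin.sum_univ_eight, Matrix.one_apply, Matrix.mulVec_diagonal]; push_cast
    linear_combination (t:ℂ)*((c0:ℂ)*e0 - c1*e1)*hB0c' + (t:ℂ)*(w0:ℂ)*hA0c'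
  · simp [kron3, mc, rotR, cz01, cz02, cz12, Matrix.mulVec, dotProduct, Fin.sum_univ_eight, Matrix.one_apply, Matrix.mulVec_diagonal]; push_cast
    linear_combination (t:ℂ)*((c0:ℂ)*e0 - c1*e1)*hB1c' - (t:ℂ)*(w1:ℂ)*hA0c'
  · simp [kron3, mc, rotR, cz01, cz02, cz12, Matrix.mulVec, dotProduct, Fin.sum_univ_eight, Matrix.one_apply, Matrix.mulVec_diagonal]; push_cast
    linear_combination (t:ℂ)*((c1:ℂ)*e0 + c0*e1)*hB0c' + (t:ℂ)*(w0:ℂ)*hA1c'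
  · simp [kron3, mc, rotR, cz01, cz02, cz12, Matrix.mulVec, dotProduct, Fin.sum_univ_eight, Matrix.one_apply, Matrix.mulVec_diagonal]; push_cast
    linear_combination (t:ℂ)*((c1:ℂ)*e0 + c0*e1)*hB1c' - (t:ℂ)*(w1:ℂ)*hA1c'

lemma st678 (s t v0 v1 w0 w1 : ℝ) (hst : s^2 + t^2 = 1) (hv : v0^2 + v1^2 = 1)
    (hw : w0^2 + w1^2 = 1) :
    (kron3 (mc (rotR s (-t))) (mc (rotR v0 (-v1))) (mc (rotR w0 (-w1)))).mulVec
      ![↑(s * (v0 * w0)), ↑(s * (v0 * w1)), ↑(s * (v1 * w0)), ↑(s * (v1 * w1)), ↑(t * (v0 * w0)), ↑(t * (v0 * w1)), ↑(t * (v1 * w0)), ↑(t * (v1 * w1))] = e000 := by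
  have hstc : (s:ℂ)^2 + (t:ℂ)^2 = 1 := by exact_mod_cast hst
  have hvc : (v0:ℂ)^2 + (v1:ℂ)^2 = 1 := by exact_mod_cast hv
  have hwc : (w0:ℂ)^2 + (w1:ℂ)^2 = 1 := by exact_mod_cast hw
  funext i
  fin_cases i
  · simp [kron3, mc, rotR, e000, Matrix.mulVec, dotProduct, Fin.sum_univ_eight]
    push_cast
    linear_combination (((v0:ℂ)^2+(v1:ℂ)^2)*((w0:ℂ)^2+(w1:ℂ)^2))*hstc + ((w0:ℂ)^2+(w1:ℂ)^2)*hvc + hwc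
  all_goals simp [kron3, mc, rotR, e000, Matrix.mulVec, dotProduct, Fin.sum_univ_eight]
  all_goals push_cast
  all_goals ring

lemma det_block (r0 r1 r2 r3 g0 g1 a0 a1 b0 b1 : ℝ) :
    (b0 * (a0 * (g0 * r0 - g1 * r1) - a1 * (g0 * r2 - g1 * r3)) - b1 * (a0 * (g1 * r0 + g0 * r1) - a1 * (-(g1 * r2 + g0 * r3)))) * (-(b1 * (a1 * (g0 * r0 - g1 * r1) + a0 * (g0 * r2 - g1 * r3)) + b0 * (a1 * (g1 * r0 + g0 * r1) + a0 * (-(g1 * r2 + g0 * r3))))) - (b1 * (a0 * (g0 * r0 - g1 * r1) - a1 * (g0 * r2 - g1 * r3)) + b0 * (a0 * (g1 * r0 + g0 * r1) - a1 * (-(g1 * r2 + g0 * r3)))) * (b0 * (a1 * (g0 * r0 - g1 * r1) + a0 * (g0 * r2 - g1 * r3)) - b1 * (a1 * (g1 * r0 + g0 * r1) + a0 * (-(g1 * r2 + g0 * r3))))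
    = -(((((↑b0 + ↑b1 * Complex.I) * (↑a0 - ↑a1 * Complex.I)) * ((↑b0 + ↑b1 * Complex.I) * (↑a0 - ↑a1 * Complex.I))) * ((↑g0 * (↑((r0 - r3)/2) + ↑((r1 - r2)/2) * Complex.I) - ↑g1 * (↑((r1 + r2)/2) - ↑((r0 + r3)/2) * Complex.I)) * (↑g0 * (↑((r0 - r3)/2) + ↑((r1 - r2)/2) * Complex.I) - ↑g1 * (↑((r1 + r2)/2) - ↑((r0 + r3)/2) * Complex.I)))
        + (((↑a0 - ↑a1 * Complex.I) * (↑b0 - ↑b1 * Complex.I)) * ((↑a0 - ↑a1 * Complex.I) * (↑b0 - ↑b1 * Complex.I))) * ((↑g0 * (↑((r1 + r2)/2) + ↑((r0 + r3)/2) * Complex.I) + ↑g1 * (↑((r0 - r3)/2) - ↑((r1 - r2)/2) * Complex.I)) * (↑g0 * (↑((r1 + r2)/2) + ↑((r0 + r3)/2) * Complex.I) + ↑g1 * (↑((r0 - r3)/2) - ↑((r1 - r2)/2) * Complex.I)))).re) := by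
  simp only [Complex.add_re, Complex.mul_re, Complex.mul_im, Complex.sub_re, Complex.sub_im,
    Complex.add_im, Complex.I_re, Complex.I_im, Complex.ofReal_re, Complex.ofReal_im]
  ring

lemma norm_pres (r0 r1 r2 r3 r4 r5 r6 r7 g0 g1 a0 a1 b0 b1 : ℝ) (hg : g0^2+g1^2 = 1)
    (ha : a0^2+a1^2 = 1) (hb : b0^2+b1^2 = 1) :
    (b0 * (a0 * (g0 * r0 - g1 * r1) - a1 * (g0 * r2 - g1 * r3)) - b1 * (a0 * (g1 * r0 + g0 * r1) - a1 * (-(g1 * r2 + g0 * r3))))^2+(b1 * (a0 * (g0 * r0 - g1 * r1) - a1 * (g0 * r2 - g1 * r3)) + b0 * (a0 * (g1 * r0 + g0 * r1) - a1 * (-(g1 * r2 + g0 * r3))))^2+(b0 * (a1 * (g0 * r0 - g1 * r1) + a0 * (g0 * r2 - g1 * r3)) - b1 * (a1 * (g1 * r0 + g0 * r1) + a0 * (-(g1 * r2 + g0 * r3))))^2+(-(b1 * (a1 * (g0 * r0 - g1 * r1) + a0 * (g0 * r2 - g1 * r3)) + b0 * (a1 * (g1 * r0 + g0 * r1) + a0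 * (-(g1 * r2 + g0 * r3)))))^2+(b0 * (a0 * (g0 * r4 - g1 * r5) - a1 * (g0 * r6 - g1 * r7)) - b1 * (a0 * (g1 * r4 + g0 * r5) - a1 * (-(g1 * r6 + g0 * r7))))^2+(b1 * (a0 * (g0 * r4 - g1 * r5) - a1 * (g0 * r6 - g1 * r7)) + b0 * (a0 * (g1 * r4 + g0 * r5) - a1 * (-(g1 * r6 + g0 * r7))))^2+(b0 * (a1 * (g0 * r4 - g1 * r5) + a0 * (g0 * r6 - g1 * r7)) - b1 * (a1 * (g1 * r4 + g0 * r5) + a0 * (-(g1 * r6 + g0 * r7))))^2+(-(b1 * (a1 * (g0 * r4 - g1 * r5) + a0 * (g0 * r6 - g1 * r7)) + b0 * (a1 * (g1 * r4 + g0 * r5) + a0 * (-(g1 * r6 + g0 * r7)))))^2 = r0^2+r1^2+r2^2+r3^2+r4^2+r5^2+r6^2+r7^2 := by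
  linear_combination ((b0^2+b1^2)*(g0^2+g1^2)*(r0^2+r1^2+r2^2+r3^2+r4^2+r5^2+r6^2+r7^2))*ha + ((g0^2+g1^2)*(r0^2+r1^2+r2^2+r3^2+r4^2+r5^2+r6^2+r7^2))*hb + (r0^2+r1^2+r2^2+r3^2+r4^2+r5^2+r6^2+r7^2)*hg

/-- every real 3-qubit state can be prepared using real local gates and at
most four controlled-Z gates:
`(W₆⊗W₇⊗W₈)·cz₁₂·cz₀₂·(I⊗W₄⊗W₅)·cz₀₁·(I⊗W₂⊗W₃)·cz₀₁·(I⊗I⊗W₀)·ψ = |000⟩`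
with all `Wᵢ` real orthogonal. -/
theorem stmt_12 (ψ : Fin 8 → ℂ) (hunit : ∑ i, ‖ψ i‖ ^ 2 = 1)
    (hreal : ∀ i, (ψ i).im = 0) :
    ∃ W₀ ∈ Matrix.orthogonalGroup (Fin 2) ℝ, ∃ W₂ ∈ Matrix.orthogonalGroup (Fin 2) ℝ,
    ∃ W₃ ∈ Matrix.orthogonalGroup (Fin 2) ℝ, ∃ W₄ ∈ Matrix.orthogonalGroup (Fin 2) ℝ,
    ∃ W₅ ∈ Matrix.orthogonalGroup (Fin 2) ℝ, ∃ W₆ ∈ Matrix.orthogonalGroup (Fin 2) ℝ,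
    ∃ W₇ ∈ Matrix.orthogonalGroup (Fin 2) ℝ, ∃ W₈ ∈ Matrix.orthogonalGroup (Fin 2) ℝ,
      (kron3 (mc W₆) (mc W₇) (mc W₈) * cz12 * cz02 * kron3 1 (mc W₄) (mc W₅) * cz01 *
        kron3 1 (mc W₂) (mc W₃) * cz01 * kron3 1 1 (mc W₀)).mulVec ψ = e000 := by
  obtain ⟨r0, hr0⟩ : ∃ x:ℝ, (ψ 0).re = x := ⟨_, rfl⟩
  obtain ⟨r1, hr1⟩ : ∃ x:ℝ, (ψ 1).re = x := ⟨_, rfl⟩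
  obtain ⟨r2, hr2⟩ : ∃ x:ℝ, (ψ 2).re = x := ⟨_, rfl⟩
  obtain ⟨r3, hr3⟩ : ∃ x:ℝ, (ψ 3).re = x := ⟨_, rfl⟩
  obtain ⟨r4, hr4⟩ : ∃ x:ℝ, (ψ 4).re = x := ⟨_, rfl⟩
  obtain ⟨r5, hr5⟩ : ∃ x:ℝ, (ψ 5).re = x := ⟨_, rfl⟩
  obtain ⟨r6, hr6⟩ : ∃ x:ℝ, (ψ 6).re = x := ⟨_, rfl⟩
  obtain ⟨r7, hr7⟩ : ∃ x:ℝ, (ψ 7).re = x := ⟨_, rfl⟩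
  have he0 : ψ 0 = ((r0 : ℝ) : ℂ) := by
    apply Complex.ext
    · simpa using hr0
    · simp [hreal 0]
  have he1 : ψ 1 = ((r1 : ℝ) : ℂ) := by
    apply Complex.ext
    · simpa using hr1
    · simp [hreal 1]
  have he2 : ψ 2 = ((r2 : ℝ) : ℂ) := by
    apply Complex.ext
    · simpa using hr2
    · simp [hreal 2]
  have he3 : ψ 3 = ((r3 : ℝ) : ℂ) := by
    apply Complex.ext
    · simpa using hr3
    · simp [hreal 3]
  have he4 : ψ 4 = ((r4 : ℝ) : ℂ) := by
    apply Complex.ext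
    · simpa using hr4
    · simp [hreal 4]
  have he5 : ψ 5 = ((r5 : ℝ) : ℂ) := by
    apply Complex.ext
    · simpa using hr5
    · simp [hreal 5]
  have he6 : ψ 6 = ((r6 : ℝ) : ℂ) := by
    apply Complex.ext
    · simpa using hr6
    · simp [hreal 6]
  have he7 : ψ 7 = ((r7 : ℝ) : ℂ) := by
    apply Complex.ext
    · simpa using hr7
    · simp [hreal 7]
  have hψ : ψ = ![((r0:ℝ):ℂ), ((r1:ℝ):ℂ), ((r2:ℝ):ℂ), ((r3:ℝ):ℂ), ((r4:ℝ):ℂ), ((r5:ℝ):ℂ), ((r6:ℝ):ℂ), ((r7:ℝ):ℂ)] := by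
    funext i; fin_cases i
    · exact he0
    · exact he1
    · exact he2
    · exact he3
    · exact he4
    · exact he5
    · exact he6
    · exact he7
  have hsum : r0^2+r1^2+r2^2+r3^2+r4^2+r5^2+r6^2+r7^2 = 1 := by
    rw [Fin.sum_univ_eight, he0, he1, he2, he3, he4, he5, he6, he7] at hunit
    simpa [Complex.norm_real, sq_abs] using hunit
  obtain ⟨g0, g1, hg, hZW⟩ := choose_g (↑((r0 - r3)/2) + ↑((r1 - r2)/2) * Complex.I) (↑((r1 + r2)/2) + ↑((r0 + r3)/2) * Complex.I)
  have hconjz0 : (starRingEnd ℂ) (↑((r0 - r3)/2) + ↑((r1 - r2)/2) * Complex.I) = (↑((r0 - r3)/2) - ↑((r1 - r2)/2) * Complex.I) := by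
    rw [map_add, _root_.map_mul, Complex.conj_ofReal, Complex.conj_ofReal, Complex.conj_I]; ring
  have hconjw0 : (starRingEnd ℂ) (↑((r1 + r2)/2) + ↑((r0 + r3)/2) * Complex.I) = (↑((r1 + r2)/2) - ↑((r0 + r3)/2) * Complex.I) := by
    rw [map_add, _root_.map_mul, Complex.conj_ofReal, Complex.conj_ofReal, Complex.conj_I]; ring
  rw [hconjw0, hconjz0] at hZW
  have habs1 : Complex.abs (↑g0 * (↑((r0 - r3)/2) + ↑((r1 - r2)/2) * Complex.I) - ↑g1 * (↑((r1 + r2)/2) - ↑((r0 + r3)/2) * Complex.I)) = Complex.abs (↑g0 * (↑((r1 + r2)/2) + ↑((r0 + r3)/2) * Complex.I) + ↑g1 * (↑((r0 - r3)/2) - ↑((r1 - r2)/2) * Complex.I)) := by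
    rw [Complex.abs_apply, Complex.abs_apply, hZW]
  have habs : Complex.abs ((↑g0 * (↑((r0 - r3)/2) + ↑((r1 - r2)/2) * Complex.I) - ↑g1 * (↑((r1 + r2)/2) - ↑((r0 + r3)/2) * Complex.I)) * (↑g0 * (↑((r0 - r3)/2) + ↑((r1 - r2)/2) * Complex.I) - ↑g1 * (↑((r1 + r2)/2) - ↑((r0 + r3)/2) * Complex.I))) = Complex.abs ((↑g0 * (↑((r1 + r2)/2) + ↑((r0 + r3)/2) * Complex.I) + ↑g1 * (↑((r0 - r3)/2) - ↑((r1 - r2)/2) * Complex.I)) * (↑g0 * (↑((r1 + r2)/2) + ↑((r0 + r3)/2) * Complex.I) + ↑g1 * (↑((r0 - r3)/2) - ↑((r1 - r2)/2) * Complex.I))) := by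
    rw [_root_.map_mul, _root_.map_mul, habs1]
  obtain ⟨alp, bet, halp, hbet, h0re, h1re⟩ := choose_alpha_beta ((↑g0 * (↑((r0 - r3)/2) + ↑((r1 - r2)/2) * Complex.I) - ↑g1 * (↑((r1 + r2)/2) - ↑((r0 + r3)/2) * Complex.I)) * (↑g0 * (↑((r0 - r3)/2) + ↑((r1 - r2)/2) * Complex.I) - ↑g1 * (↑((r1 + r2)/2) - ↑((r0 + r3)/2) * Complex.I))) ((↑g0 * (↑((r1 + r2)/2) + ↑((r0 + r3)/2) * Complex.I) + ↑g1 * (↑((r0 - r3)/2) - ↑((r1 - r2)/2) * Complex.I)) * (↑g0 * (↑((r1 + r2)/2) + ↑((r0 + r3)/2) * Complex.I) + ↑g1 * (↑((r0 - r3)/2) - ↑((r1 - r2)/2) * Complex.I))) ((↑g0 * (↑((r4 - r7)/2) + ↑((r5 - r6)/2) * Complex.I) - ↑g1 * (↑((r5 + r6)/2) - ↑((r4 + r7)/2) * Complex.I)) * (↑g0 * (↑((r4 - r7)/2) + ↑((r5 - r6)/2) * Complex.I) - ↑g1 * (↑((r5 + r6)/2) - ↑((r4 + r7)/2) * Complex.I)))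 ((↑g0 * (↑((r5 + r6)/2) + ↑((r4 + r7)/2) * Complex.I) + ↑g1 * (↑((r4 - r7)/2) - ↑((r5 - r6)/2) * Complex.I)) * (↑g0 * (↑((r5 + r6)/2) + ↑((r4 + r7)/2) * Complex.I) + ↑g1 * (↑((r4 - r7)/2) - ↑((r5 - r6)/2) * Complex.I))) habs
  obtain ⟨lam, hlam⟩ := csqrt alp
  obtain ⟨mu, hmu⟩ := csqrt bet
  obtain ⟨sq, hsq⟩ := csqrt (lam * mu)
  have hlamabs : Complex.abs lam = 1 := unit_abs_sqrt hlam halp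
  have hmuabs : Complex.abs mu = 1 := unit_abs_sqrt hmu hbet
  have hlmabs : Complex.abs (lam*mu) = 1 := by rw [_root_.map_mul, hlamabs, hmuabs]; norm_num
  have hsqabs : Complex.abs sq = 1 := unit_abs_sqrt hsq hlmabs
  obtain ⟨aC, haCd⟩ : ∃ z:ℂ, z = (starRingEnd ℂ) sq := ⟨_, rfl⟩
  have haCabs : Complex.abs aC = 1 := by rw [haCd, Complex.abs_conj]; exact hsqabs
  obtain ⟨bC, hbCd⟩ : ∃ z:ℂ, z = lam * aC := ⟨_, rfl⟩
  have hbCabs : Complex.abs bC = 1 := by rw [hbCd, _root_.map_mul, hlamabs, haCabs]; norm_num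
  obtain ⟨a0, ha0⟩ : ∃ x:ℝ, aC.re = x := ⟨_, rfl⟩
  obtain ⟨a1, ha1⟩ : ∃ x:ℝ, aC.im = x := ⟨_, rfl⟩
  obtain ⟨b0, hb0⟩ : ∃ x:ℝ, bC.re = x := ⟨_, rfl⟩
  obtain ⟨b1, hb1⟩ : ∃ x:ℝ, bC.im = x := ⟨_, rfl⟩
  have ha : a0^2 + a1^2 = 1 := by rw [← ha0, ← ha1]; exact unit_re_im haCabs
  have hb : b0^2 + b1^2 = 1 := by rw [← hb0, ← hb1]; exact unit_re_im hbCabs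
  have hre_a : ((a0:ℂ) - (a1:ℂ) * Complex.I) = (starRingEnd ℂ) aC := by
    rw [← ha0, ← ha1]; apply Complex.ext <;> simp
  have hre_b : ((b0:ℂ) + (b1:ℂ) * Complex.I) = bC := by
    rw [← hb0, ← hb1]; exact Complex.re_add_im bC
  have hre_bbar : ((b0:ℂ) - (b1:ℂ) * Complex.I) = (starRingEnd ℂ) bC := by
    rw [← hb0, ← hb1]; apply Complex.ext <;> simp
  have haCconj : (starRingEnd ℂ) aC = sq := by rw [haCd, Complex.conj_conj]
  have haCnorm : aC * (starRingEnd ℂ) aC = 1 := mul_conj_one haCabs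
  have hlamnorm : (starRingEnd ℂ) lam * lam = 1 := by
    rw [mul_comm]; exact mul_conj_one hlamabs
  have hLeq : bC * (starRingEnd ℂ) aC = lam := by rw [hbCd, mul_assoc, haCnorm, mul_one]
  have hMeq : (starRingEnd ℂ) aC * (starRingEnd ℂ) bC = mu := by
    rw [hbCd, _root_.map_mul, haCconj]
    rw [show sq * ((starRingEnd ℂ) lam * sq)
        = (starRingEnd ℂ) lam * (sq * sq) by ring]
    rw [hsq]
    rw [show (starRingEnd ℂ) lam * (lam * mu) = ((starRingEnd ℂ) lam * lam) * mu by ring]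
    rw [hlamnorm, one_mul]
  have hdet0' := det_block r0 r1 r2 r3 g0 g1 a0 a1 b0 b1
  rw [hre_b, hre_a, hre_bbar, hLeq, hMeq, hlam, hmu, h0re] at hdet0'
  have hdet0 : (b0 * (a0 * (g0 * r0 - g1 * r1) - a1 * (g0 * r2 - g1 * r3)) - b1 * (a0 * (g1 * r0 + g0 * r1) - a1 * (-(g1 * r2 + g0 * r3)))) * (-(b1 * (a1 * (g0 * r0 - g1 * r1) + a0 * (g0 * r2 - g1 * r3)) + b0 * (a1 * (g1 * r0 + g0 * r1) + a0 * (-(g1 * r2 + g0 * r3))))) - (b1 * (a0 * (g0 * r0 - g1 * r1) - a1 * (g0 * r2 - g1 * r3)) + b0 * (a0 * (g1 * r0 + g0 * r1) - a1 * (-(g1 * r2 + g0 * r3)))) * (b0 * (a1 * (g0 * r0 - g1 * r1) + a0 * (g0 * r2 - g1 * r3)) - b1 * (a1 * (g1 * r0 + g0 * r1) + a0 * (-(g1 * r2 + g0 * r3)))) = 0 := by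
    rw [hdet0']; ring
  have hdet1' := det_block r4 r5 r6 r7 g0 g1 a0 a1 b0 b1
  rw [hre_b, hre_a, hre_bbar, hLeq, hMeq, hlam, hmu, h1re] at hdet1'
  have hdet1 : (b0 * (a0 * (g0 * r4 - g1 * r5) - a1 * (g0 * r6 - g1 * r7)) - b1 * (a0 * (g1 * r4 + g0 * r5) - a1 * (-(g1 * r6 + g0 * r7)))) * (-(b1 * (a1 * (g0 * r4 - g1 * r5) + a0 * (g0 * r6 - g1 * r7)) + b0 * (a1 * (g1 * r4 + g0 * r5) + a0 * (-(g1 * r6 + g0 * r7))))) - (b1 * (a0 * (g0 * r4 - g1 * r5) - a1 * (g0 * r6 - g1 * r7)) + b0 * (a0 * (g1 * r4 + g0 * r5) - a1 * (-(g1 * r6 + g0 * r7)))) * (b0 * (a1 * (g0 * r4 - g1 * r5) + a0 * (g0 * r6 - g1 * r7)) - b1 * (a1 * (g1 * r4 + g0 * r5) + a0 * (-(g1 * r6 + g0 * r7)))) = 0 := by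
    rw [hdet1']; ring
  have hQ := norm_pres r0 r1 r2 r3 r4 r5 r6 r7 g0 g1 a0 a1 b0 b1 hg ha hb
  obtain ⟨s, p0, p1, q0, q1, hp, hq, hs2, hm00, hm01, hm10, hm11⟩ := rank1 (b0 * (a0 * (g0 * r0 - g1 * r1) - a1 * (g0 * r2 - g1 * r3)) - b1 * (a0 * (g1 * r0 + g0 * r1) - a1 * (-(g1 * r2 + g0 * r3)))) (b1 * (a0 * (g0 * r0 - g1 * r1) - a1 * (g0 * r2 - g1 * r3)) + b0 * (a0 * (g1 * r0 + g0 * r1) - a1 * (-(g1 * r2 + g0 * r3)))) (b0 * (a1 * (g0 * r0 - g1 * r1) + a0 * (g0 * r2 - g1 * r3)) - b1 * (a1 * (g1 * r0 + g0 * r1) + a0 * (-(g1 * r2 + g0 * r3)))) (-(b1 * (a1 * (g0 * r0 - g1 * r1) + a0 * (g0 * r2 - g1 * r3)) + b0 * (a1 * (g1 * r0 + g0 * r1) + a0 * (-(g1 * r2 + g0 * r3))))) hdet0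
  obtain ⟨t, e0, e1, f0, f1, hpe, hqf, ht2, hn00, hn01, hn10, hn11⟩ := rank1 (b0 * (a0 * (g0 * r4 - g1 * r5) - a1 * (g0 * r6 - g1 * r7)) - b1 * (a0 * (g1 * r4 + g0 * r5) - a1 * (-(g1 * r6 + g0 * r7)))) (b1 * (a0 * (g0 * r4 - g1 * r5) - a1 * (g0 * r6 - g1 * r7)) + b0 * (a0 * (g1 * r4 + g0 * r5) - a1 * (-(g1 * r6 + g0 * r7)))) (b0 * (a1 * (g0 * r4 - g1 * r5) + a0 * (g0 * r6 - g1 * r7)) - b1 * (a1 * (g1 * r4 + g0 * r5) + a0 * (-(g1 * r6 + g0 * r7)))) (-(b1 * (a1 * (g0 * r4 - g1 * r5) + a0 * (g0 * r6 - g1 * r7)) + b0 * (a1 * (g1 * r4 + g0 * r5) + a0 * (-(g1 * r6 + g0 * r7))))) hdet1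
  have hst : s^2 + t^2 = 1 := by rw [hs2, ht2]; linarith [hQ, hsum]
  have hPQ1 : (p0*e0+p1*e1)^2 + (-(p0*e1 - p1*e0))^2 = 1 := by
    linear_combination (e0^2+e1^2)*hp + hpe
  obtain ⟨v0, v1, hv, hvt, hvD⟩ := half_angle (p0*e0+p1*e1) (-(p0*e1 - p1*e0)) hPQ1
  have hPQ2 : (q0*f0+q1*f1)^2 + (-(q0*f1 - q1*f0))^2 = 1 := by
    linear_combination (f0^2+f1^2)*hq + hqf
  obtain ⟨w0, w1, hw, hwt, hwD⟩ := half_angle (q0*f0+q1*f1) (-(q0*f1 - q1*f0)) hPQ2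
  have hA0 : (v0*p0+v1*p1)*p0 - (v1*p0-v0*p1)*p1 = v0 := by linear_combination v0*hp
  have hA1 : (v1*p0-v0*p1)*p0 + (v0*p0+v1*p1)*p1 = v1 := by linear_combination v1*hp
  have hA0' : (v0*p0+v1*p1)*e0 - (v1*p0-v0*p1)*e1 = v0 := by
    linear_combination (-v0)*hvt + (-v1)*hvD + v0*hv
  have hA1' : (v1*p0-v0*p1)*e0 + (v0*p0+v1*p1)*e1 = -v1 := by
    linear_combination (-v1)*hvt + v0*hvD + (-v1)*hv
  have hB0 : (w0*q0+w1*q1)*q0 - (w1*q0-w0*q1)*q1 = w0 := by linear_combination w0*hq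
  have hB1 : (w1*q0-w0*q1)*q0 + (w0*q0+w1*q1)*q1 = w1 := by linear_combination w1*hq
  have hB0' : (w0*q0+w1*q1)*f0 - (w1*q0-w0*q1)*f1 = w0 := by
    linear_combination (-w0)*hwt + (-w1)*hwD + w0*hw
  have hB1' : (w1*q0-w0*q1)*f0 + (w0*q0+w1*q1)*f1 = -w1 := by
    linear_combination (-w1)*hwt + w0*hwD + (-w1)*hw
  have hm00c := congrArg (fun x:ℝ => (x:ℂ)) hm00
  push_cast at hm00c
  have hm01c := congrArg (fun x:ℝ => (x:ℂ)) hm01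
  push_cast at hm01c
  have hm10c := congrArg (fun x:ℝ => (x:ℂ)) hm10
  push_cast at hm10c
  have hm11c := congrArg (fun x:ℝ => (x:ℂ)) hm11
  push_cast at hm11c
  have hn00c := congrArg (fun x:ℝ => (x:ℂ)) hn00
  push_cast at hn00c
  have hn01c := congrArg (fun x:ℝ => (x:ℂ)) hn01
  push_cast at hn01c
  have hn10c := congrArg (fun x:ℝ => (x:ℂ)) hn10
  push_cast at hn10c
  have hn11c := congrArg (fun x:ℝ => (x:ℂ)) hn11
  push_cast at hn11c
  refine ⟨rotR g0 g1, rotR_mem hg, rotR a0 a1, rotR_mem ha, rotR b0 b1, rotR_mem hb,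
    rotR (v0*p0+v1*p1) (v1*p0-v0*p1), rotR_mem (by linear_combination (p0^2+p1^2)*hv + hp),
    rotR (w0*q0+w1*q1) (w1*q0-w0*q1), rotR_mem (by linear_combination (q0^2+q1^2)*hw + hq),
    rotR s (-t), rotR_mem (by linear_combination hst),
    rotR v0 (-v1), rotR_mem (by linear_combination hv),
    rotR w0 (-w1), rotR_mem (by linear_combination hw), ?_⟩
  rw [hψ]
  simp only [← Matrix.mulVec_mulVec]
  rw [stW0 g0 g1, czA, st23 a0 a1 b0 b1, czA]
  have hvec : (![↑b0 * (↑a0 * (↑g0 * ((r0 : ℝ) : ℂ) - ↑g1 * ((r1 : ℝ) : ℂ)) - ↑a1 * (↑g0 * ((r2 : ℝ) : ℂ) - ↑g1 * ((r3 : ℝ) : ℂ))) - ↑b1 * (↑a0 * (↑g1 * ((r0 : ℝ) : ℂ) + ↑g0 * ((r1 : ℝ) : ℂ)) - ↑a1 * (-(↑g1 * ((r2 : ℝ) : ℂ) + ↑g0 * ((r3 : ℝ) : ℂ)))), ↑b1 * (↑a0 * (↑g0 * ((r0 : ℝ) : ℂ) - ↑g1 * ((r1 : ℝ) : ℂ))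 - ↑a1 * (↑g0 * ((r2 : ℝ) : ℂ) - ↑g1 * ((r3 : ℝ) : ℂ))) + ↑b0 * (↑a0 * (↑g1 * ((r0 : ℝ) : ℂ) + ↑g0 * ((r1 : ℝ) : ℂ)) - ↑a1 * (-(↑g1 * ((r2 : ℝ) : ℂ) + ↑g0 * ((r3 : ℝ) : ℂ)))), ↑b0 * (↑a1 * (↑g0 * ((r0 : ℝ) : ℂ) - ↑g1 * ((r1 : ℝ) : ℂ)) + ↑a0 * (↑g0 * ((r2 : ℝ) : ℂ) - ↑g1 * ((r3 : ℝ) : ℂ))) - ↑b1 * (↑a1 * (↑g1 * ((r0 : ℝ) : ℂ) + ↑g0 * ((r1 : ℝ) : ℂ)) + ↑a0 * (-(↑g1 * ((r2 : ℝ) : ℂ) + ↑g0 * ((r3 : ℝ) : ℂ)))), -(↑b1 * (↑a1 * (↑g0 * ((r0 : ℝ) : ℂ) - ↑g1 * ((r1 : ℝ) : ℂ)) + ↑a0 * (↑g0 * ((r2 : ℝ) : ℂ) - ↑g1 * ((r3 : ℝ) : ℂ))) + ↑b0 * (↑a1 * (↑g1 * ((r0 : ℝ) : ℂ) + ↑g0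 * ((r1 : ℝ) : ℂ)) + ↑a0 * (-(↑g1 * ((r2 : ℝ) : ℂ) + ↑g0 * ((r3 : ℝ) : ℂ))))), ↑b0 * (↑a0 * (↑g0 * ((r4 : ℝ) : ℂ) - ↑g1 * ((r5 : ℝ) : ℂ)) - ↑a1 * (↑g0 * ((r6 : ℝ) : ℂ) - ↑g1 * ((r7 : ℝ) : ℂ))) - ↑b1 * (↑a0 * (↑g1 * ((r4 : ℝ) : ℂ) + ↑g0 * ((r5 : ℝ) : ℂ)) - ↑a1 * (-(↑g1 * ((r6 : ℝ) : ℂ) + ↑g0 * ((r7 : ℝ) : ℂ)))), ↑b1 * (↑a0 * (↑g0 * ((r4 : ℝ) : ℂ) - ↑g1 * ((r5 : ℝ) : ℂ)) - ↑a1 * (↑g0 * ((r6 : ℝ) : ℂ) - ↑g1 * ((r7 : ℝ) : ℂ))) + ↑b0 * (↑a0 * (↑g1 * ((r4 : ℝ) : ℂ) + ↑g0 * ((r5 : ℝ) : ℂ)) - ↑a1 * (-(↑g1 * ((r6 : ℝ) : ℂ) + ↑g0 * ((r7 : ℝ) : ℂ)))), ↑b0 * (↑a1 * (↑g0 * ((r4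 : ℝ) : ℂ) - ↑g1 * ((r5 : ℝ) : ℂ)) + ↑a0 * (↑g0 * ((r6 : ℝ) : ℂ) - ↑g1 * ((r7 : ℝ) : ℂ))) - ↑b1 * (↑a1 * (↑g1 * ((r4 : ℝ) : ℂ) + ↑g0 * ((r5 : ℝ) : ℂ)) + ↑a0 * (-(↑g1 * ((r6 : ℝ) : ℂ) + ↑g0 * ((r7 : ℝ) : ℂ)))), -(↑b1 * (↑a1 * (↑g0 * ((r4 : ℝ) : ℂ) - ↑g1 * ((r5 : ℝ) : ℂ)) + ↑a0 * (↑g0 * ((r6 : ℝ) : ℂ) - ↑g1 * ((r7 : ℝ) : ℂ))) + ↑b0 * (↑a1 * (↑g1 * ((r4 : ℝ) : ℂ) + ↑g0 * ((r5 : ℝ) : ℂ)) + ↑a0 * (-(↑g1 * ((r6 : ℝ) : ℂ) + ↑g0 * ((r7 : ℝ) : ℂ)))))] : Fin 8 → ℂ) = ![↑(s * (p0 * q0)), ↑(s * (p0 * q1)), ↑(s * (p1 * q0)), ↑(s * (p1 * q1)), ↑(t * (e0 * f0)), ↑(t * (e0 * f1)), ↑(t * (e1 * f0)), ↑(t * (e1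 * f1))] := by
    funext i; fin_cases i
    · show (↑b0 * (↑a0 * (↑g0 * ((r0 : ℝ) : ℂ) - ↑g1 * ((r1 : ℝ) : ℂ)) - ↑a1 * (↑g0 * ((r2 : ℝ) : ℂ) - ↑g1 * ((r3 : ℝ) : ℂ))) - ↑b1 * (↑a0 * (↑g1 * ((r0 : ℝ) : ℂ) + ↑g0 * ((r1 : ℝ) : ℂ)) - ↑a1 * (-(↑g1 * ((r2 : ℝ) : ℂ) + ↑g0 * ((r3 : ℝ) : ℂ))))) = (↑(s * (p0 * q0)) : ℂ)
      push_cast; linear_combination hm00c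
    · show (↑b1 * (↑a0 * (↑g0 * ((r0 : ℝ) : ℂ) - ↑g1 * ((r1 : ℝ) : ℂ)) - ↑a1 * (↑g0 * ((r2 : ℝ) : ℂ) - ↑g1 * ((r3 : ℝ) : ℂ))) + ↑b0 * (↑a0 * (↑g1 * ((r0 : ℝ) : ℂ) + ↑g0 * ((r1 : ℝ) : ℂ)) - ↑a1 * (-(↑g1 * ((r2 : ℝ) : ℂ) + ↑g0 * ((r3 : ℝ) : ℂ))))) = (↑(s * (p0 * q1)) : ℂ)
      push_cast; linear_combination hm01c
    · show (↑b0 * (↑a1 * (↑g0 * ((r0 : ℝ) : ℂ) - ↑g1 * ((r1 : ℝ) : ℂ)) + ↑a0 * (↑g0 * ((r2 : ℝ) : ℂ) - ↑g1 * ((r3 : ℝ) : ℂ))) - ↑b1 * (↑a1 * (↑g1 * ((r0 : ℝ) : ℂ) + ↑g0 * ((r1 : ℝ) : ℂ)) + ↑a0 * (-(↑g1 * ((r2 : ℝ) : ℂ) + ↑g0 * ((r3 : ℝ) : ℂ))))) = (↑(s * (p1 * q0)) : ℂ)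
      push_cast; linear_combination hm10c
    · show (-(↑b1 * (↑a1 * (↑g0 * ((r0 : ℝ) : ℂ) - ↑g1 * ((r1 : ℝ) : ℂ)) + ↑a0 * (↑g0 * ((r2 : ℝ) : ℂ) - ↑g1 * ((r3 : ℝ) : ℂ))) + ↑b0 * (↑a1 * (↑g1 * ((r0 : ℝ) : ℂ) + ↑g0 * ((r1 : ℝ) : ℂ)) + ↑a0 * (-(↑g1 * ((r2 : ℝ) : ℂ) + ↑g0 * ((r3 : ℝ) : ℂ)))))) = (↑(s * (p1 * q1)) : ℂ)
      push_cast; linear_combination hm11c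
    · show (↑b0 * (↑a0 * (↑g0 * ((r4 : ℝ) : ℂ) - ↑g1 * ((r5 : ℝ) : ℂ)) - ↑a1 * (↑g0 * ((r6 : ℝ) : ℂ) - ↑g1 * ((r7 : ℝ) : ℂ))) - ↑b1 * (↑a0 * (↑g1 * ((r4 : ℝ) : ℂ) + ↑g0 * ((r5 : ℝ) : ℂ)) - ↑a1 * (-(↑g1 * ((r6 : ℝ) : ℂ) + ↑g0 * ((r7 : ℝ) : ℂ))))) = (↑(t * (e0 * f0)) : ℂ)
      push_cast; linear_combination hn00c
    · show (↑b1 * (↑a0 * (↑g0 * ((r4 : ℝ) : ℂ) - ↑g1 * ((r5 : ℝ) : ℂ)) - ↑a1 * (↑g0 * ((r6 : ℝ) : ℂ) - ↑g1 * ((r7 : ℝ) : ℂ))) + ↑b0 * (↑a0 * (↑g1 * ((r4 : ℝ) : ℂ) + ↑g0 * ((r5 : ℝ) : ℂ)) - ↑a1 * (-(↑g1 * ((r6 : ℝ) : ℂ) + ↑g0 * ((r7 : ℝ) : ℂ))))) = (↑(t * (e0 * f1)) : ℂ)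
      push_cast; linear_combination hn01c
    · show (↑b0 * (↑a1 * (↑g0 * ((r4 : ℝ) : ℂ) - ↑g1 * ((r5 : ℝ) : ℂ)) + ↑a0 * (↑g0 * ((r6 : ℝ) : ℂ) - ↑g1 * ((r7 : ℝ) : ℂ))) - ↑b1 * (↑a1 * (↑g1 * ((r4 : ℝ) : ℂ) + ↑g0 * ((r5 : ℝ) : ℂ)) + ↑a0 * (-(↑g1 * ((r6 : ℝ) : ℂ) + ↑g0 * ((r7 : ℝ) : ℂ))))) = (↑(t * (e1 * f0)) : ℂ)
      push_cast; linear_combination hn10c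
    · show (-(↑b1 * (↑a1 * (↑g0 * ((r4 : ℝ) : ℂ) - ↑g1 * ((r5 : ℝ) : ℂ)) + ↑a0 * (↑g0 * ((r6 : ℝ) : ℂ) - ↑g1 * ((r7 : ℝ) : ℂ))) + ↑b0 * (↑a1 * (↑g1 * ((r4 : ℝ) : ℂ) + ↑g0 * ((r5 : ℝ) : ℂ)) + ↑a0 * (-(↑g1 * ((r6 : ℝ) : ℂ) + ↑g0 * ((r7 : ℝ) : ℂ)))))) = (↑(t * (e1 * f1)) : ℂ)
      push_cast; linear_combination hn11c
  rw [hvec]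
  rw [st45 (v0*p0+v1*p1) (v1*p0-v0*p1) (w0*q0+w1*q1) (w1*q0-w0*q1) s t p0 p1 q0 q1 e0 e1 f0 f1
    v0 v1 w0 w1 hA0 hA1 hA0' hA1' hB0 hB1 hB0' hB1']
  rw [czB, czC]
  have hvec2 : (![↑(s * (v0 * w0)), ↑(s * (v0 * w1)), ↑(s * (v1 * w0)), ↑(s * (v1 * w1)), ↑(t * (v0 * w0)), -(-↑(t * (v0 * w1))), -(-↑(t * (v1 * w0))), -(-↑(t * (v1 * w1)))] : Fin 8 → ℂ) = ![↑(s * (v0 * w0)), ↑(s * (v0 * w1)), ↑(s * (v1 * w0)), ↑(s * (v1 * w1)), ↑(t * (v0 * w0)), ↑(t * (v0 * w1)), ↑(t * (v1 * w0)), ↑(t * (v1 * w1))] := by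
    funext i; fin_cases i
    · show (↑(s * (v0 * w0))) = (↑(s * (v0 * w0)) : ℂ)
      ring
    · show (↑(s * (v0 * w1))) = (↑(s * (v0 * w1)) : ℂ)
      ring
    · show (↑(s * (v1 * w0))) = (↑(s * (v1 * w0)) : ℂ)
      ring
    · show (↑(s * (v1 * w1))) = (↑(s * (v1 * w1)) : ℂ)
      ring
    · show (↑(t * (v0 * w0))) = (↑(t * (v0 * w0)) : ℂ)
      ring
    · show (-(-↑(t * (v0 * w1)))) = (↑(t * (v0 * w1)) : ℂ)
      ring
    · show (-(-↑(t * (v1 * w0)))) = (↑(t * (v1 * w0)) : ℂ)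
      ring
    · show (-(-↑(t * (v1 * w1)))) = (↑(t * (v1 * w1)) : ℂ)
      ring
  rw [hvec2]
  exact st678 s t v0 v1 w0 w1 hst hv hw
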